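/- Fix guessing functions on an acyclic directed graph A with I vertices over colour set [q]. For every d with 0 ≤ d ≤ I, the number of hat assignments x ∈ [q]^I for which exactly d vertices of A guess correctly is C(I,d)·(q−1)^{I−d}. -/

import Mathlib

open Finset

/-- Inner count: number of `a : Fin q` with `c + (if a = g then 1 else 0) = d`. -/
private lemma inner_count (q : ℕ) (c d : ℕ) (g : Fin q) :
    Fintype.card {a : Fin q // c + (if a = g then 1 else 0) = d}
      = (if c + 1 = d then 1 else 0) + (if c = d then q - 1 else 0) := by
  by_cases h1 : c + 1 = d
  · have h2 : ¬ c = d := by omega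
    have hiff : ∀ a : Fin q, (c + (if a = g then 1 else 0) = d) ↔ a = g := by
      intro a; by_cases h : a = g <;> simp [h] <;> omega
    rw [Fintype.card_congr (Equiv.subtypeEquivRight hiff), Fintype.card_subtype_eq]
    simp [h1, h2]
  · by_cases h2 : c = d
    · have hiff : ∀ a : Fin q, (c + (if a = g then 1 else 0) = d) ↔ ¬ (a = g) := by
        intro a; by_cases h : a = g <;> simp [h] <;> omega
      rw [Fintype.card_congr (Equiv.subtypeEquivRight hiff),
        Fintype.card_subtype_compl, Fintype.card_subtype_eq, Fintype.card_fin]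
      simp [h1, h2]
    · have : IsEmpty {a : Fin q // c + (if a = g then 1 else 0) = d} := by
        constructor; rintro ⟨a, ha⟩
        by_cases h : a = g <;> simp [h] at ha <;> omega
      rw [Fintype.card_eq_zero]
      simp [h1, h2]

private lemma aux_count (q : ℕ) (hq : 1 ≤ q) :
    ∀ (n : ℕ) (V : Type u) (inst : Fintype V) (adj : V → V → Prop),
      (∀ v, ¬ Relation.TransGen adj v v) →
      ∀ (f : V → (V → Fin q) → Fin q),
      (∀ (v : V) (x y : V → Fin q), (∀ u, adj u v → x u = y u) → f v x = f v y) →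
      Fintype.card V = n → ∀ d : ℕ,
      Nat.card {x : V → Fin q // (univ.filter fun v => f v x = x v).card = d}
        = n.choose d * (q - 1) ^ (n - d) := by
  intro n
  induction n with
  | zero =>
    intro V inst adj hacyclic f hdep hcard d
    classical
    haveI : IsEmpty V := Fintype.card_eq_zero_iff.mp hcard
    rcases Nat.eq_zero_or_pos d with rfl | hd
    · have hiff : ∀ x : V → Fin q,
          ((univ.filter fun v => f v x = x v).card = 0) ↔ True := by
        intro x; simp [Finset.card_eq_zero, Finset.filter_eq_empty_iff]
      rw [Nat.card_congr (Equiv.subtypeEquivRight hiff)]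
      rw [Nat.card_congr (Equiv.subtypeUnivEquiv (fun _ => trivial))]
      haveI : Unique (V → Fin q) :=
        ⟨⟨fun v => isEmptyElim v⟩, fun y => funext fun v => isEmptyElim v⟩
      simp [Nat.card_eq_fintype_card]
    · have : IsEmpty {x : V → Fin q // (univ.filter fun v => f v x = x v).card = d} := by
        constructor; rintro ⟨x, hx⟩
        have : (univ.filter fun v => f v x = x v).card = 0 := by
          simp [Finset.card_eq_zero, Finset.filter_eq_empty_iff]
        omega
      rw [Nat.card_of_isEmpty, Nat.choose_eq_zero_of_lt (by omega), zero_mul]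
  | succ n IH =>
    intro V inst adj hacyclic f hdep hcard d
    classical
    -- find a vertex with no outgoing edges
    haveI : Nonempty V := Fintype.card_pos_iff.mp (by omega)
    obtain ⟨v₀, hout⟩ : ∃ v₀ : V, ∀ w, ¬ adj v₀ w := by
      let r : V → V → Prop := fun a b => Relation.TransGen adj b a
      haveI : IsTrans V r := ⟨fun a b c hab hbc => Relation.TransGen.trans hbc hab⟩
      haveI : IsIrrefl V r := ⟨fun a ha => hacyclic a ha⟩
      obtain ⟨v₀, -, hmin⟩ :=
        (Finite.wellFounded_of_trans_of_irrefl r).has_min Set.univ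
          ⟨Classical.arbitrary V, trivial⟩
      exact ⟨v₀, fun w hw => hmin w trivial (Relation.TransGen.single hw)⟩
    -- set up the smaller instance
    let a₀ : Fin q := ⟨0, hq⟩
    let merge : Fin q → ({v : V // v ≠ v₀} → Fin q) → V → Fin q :=
      fun a x' w => if h : w = v₀ then a else x' ⟨w, h⟩
    have merge_ne : ∀ a x' (w : V) (hw : w ≠ v₀), merge a x' w = x' ⟨w, hw⟩ := by
      intro a x' w hw; simp [merge, hw]
    have merge_v₀ : ∀ a x', merge a x' v₀ = a := by intro a x'; simp [merge]
    have indep : ∀ (a b : Fin q) x' (w : V), f w (merge a x') = f w (merge b x') := by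
      intro a b x' w
      apply hdep
      intro u hu
      have hu0 : u ≠ v₀ := fun h => hout w (h ▸ hu)
      rw [merge_ne a x' u hu0, merge_ne b x' u hu0]
    let adj' : {v : V // v ≠ v₀} → {v : V // v ≠ v₀} → Prop := fun u w => adj u.1 w.1
    let f' : {v : V // v ≠ v₀} → ({v : V // v ≠ v₀} → Fin q) → Fin q :=
      fun w x' => f w.1 (merge a₀ x')
    have hacyclic' : ∀ v, ¬ Relation.TransGen adj' v v := by
      intro v hv
      exact hacyclic v.1 (Relation.TransGen.lift (r := adj') (p := adj) Subtype.val (fun a b h => h) v v hv)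
    have hdep' : ∀ (v : {v : V // v ≠ v₀}) x y,
        (∀ u, adj' u v → x u = y u) → f' v x = f' v y := by
      intro v x y h
      apply hdep
      intro u hu
      have hu0 : u ≠ v₀ := fun he => hout v.1 (he ▸ hu)
      rw [merge_ne a₀ x u hu0, merge_ne a₀ y u hu0]
      exact h ⟨u, hu0⟩ hu
    have hcard' : Fintype.card {v : V // v ≠ v₀} = n := by
      rw [Fintype.card_subtype_compl, Fintype.card_subtype_eq, hcard]
      omega
    -- correctness count splits
    let C' : ({v : V // v ≠ v₀} → Fin q) → ℕ :=
      fun x' => (univ.filter fun w : {v : V // v ≠ v₀} => f' w x' = x' w).card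
    let g : ({v : V // v ≠ v₀} → Fin q) → Fin q := fun x' => f v₀ (merge a₀ x')
    have count_split : ∀ (a : Fin q) x',
        (univ.filter fun v => f v (merge a x') = merge a x' v).card
          = C' x' + (if a = g x' then 1 else 0) := by
      intro a x'
      rw [Finset.card_filter]
      have hv₀ : v₀ ∈ (univ : Finset V) := mem_univ v₀
      rw [← Finset.add_sum_erase _ _ hv₀, add_comm (C' x')]
      congr 1
      · rw [merge_v₀]
        have hg : f v₀ (merge a x') = g x' := indep a a₀ x' v₀
        rw [hg]
        by_cases h : a = g x' <;> simp [h, eq_comm]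
      · rw [Finset.sum_subtype (p := fun v => v ≠ v₀) (univ.erase v₀) (fun x => by simp)]
        show _ = (univ.filter fun w : {v : V // v ≠ v₀} => f' w x' = x' w).card
        rw [Finset.card_filter]
        apply Finset.sum_congr rfl
        intro w _
        have h1 : f w.1 (merge a x') = f' w x' := indep a a₀ x' w.1
        rw [h1, merge_ne a x' w.1 w.2]
    -- the splitting equivalence
    let e : (V → Fin q) ≃ Fin q × ({v : V // v ≠ v₀} → Fin q) :=
      { toFun := fun x => (x v₀, fun w => x w.1)
        invFun := fun p => merge p.1 p.2
        left_inv := by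
          intro x; funext w
          by_cases h : w = v₀
          · subst h; exact merge_v₀ _ _
          · exact merge_ne _ _ w h
        right_inv := by
          rintro ⟨a, x'⟩
          exact Prod.ext (merge_v₀ a x') (funext fun w => merge_ne a x' w.1 w.2) }
    have hleft : ∀ x : V → Fin q, merge (x v₀) (fun w => x w.1) = x := e.left_inv
    -- main computation
    have main :
        Nat.card {x : V → Fin q // (univ.filter fun v => f v x = x v).card = d}
          = ∑ x' : ({v : V // v ≠ v₀} → Fin q),
              ((if C' x' + 1 = d then 1 else 0) + (if C' x' = d then q - 1 else 0)) := by
      rw [Nat.card_congr (e.subtypeEquiv (q := fun p =>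
          (univ.filter fun v => f v (merge p.1 p.2) = merge p.1 p.2 v).card = d)
          (fun x => by simp only [e, Equiv.coe_fn_mk, hleft x]))]
      let e2 : {p : Fin q × ({v : V // v ≠ v₀} → Fin q) //
            (univ.filter fun v => f v (merge p.1 p.2) = merge p.1 p.2 v).card = d}
          ≃ Σ x' : ({v : V // v ≠ v₀} → Fin q),
              {a : Fin q // (univ.filter fun v => f v (merge a x') = merge a x' v).card = d} :=
        { toFun := fun p => ⟨p.1.2, p.1.1, p.2⟩
          invFun := fun s => ⟨(s.2.1, s.1), s.2.2⟩
          left_inv := fun p => rfl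
          right_inv := fun s => rfl }
      rw [Nat.card_congr e2, Nat.card_eq_fintype_card, Fintype.card_sigma]
      apply Finset.sum_congr rfl
      intro x' _
      have : ∀ a : Fin q,
          ((univ.filter fun v => f v (merge a x') = merge a x' v).card = d)
            ↔ (C' x' + (if a = g x' then 1 else 0) = d) := by
        intro a; rw [count_split a x']
      rw [Fintype.card_congr (Equiv.subtypeEquivRight this), inner_count]
    rw [main, Finset.sum_add_distrib]
    have hIH : ∀ k : ℕ,
        (univ.filter fun x' : ({v : V // v ≠ v₀} → Fin q) => C' x' = k).card
          = n.choose k * (q - 1) ^ (n - k) := by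
      intro k
      have := IH {v : V // v ≠ v₀} _ adj' hacyclic' f' hdep' hcard' k
      rw [← this, Nat.card_eq_fintype_card, Fintype.card_subtype]
    have hsum2 : (∑ x' : ({v : V // v ≠ v₀} → Fin q),
        (if C' x' = d then q - 1 else 0)) = (q - 1) * (n.choose d * (q - 1) ^ (n - d)) := by
      rw [← hIH d, Finset.card_filter, Finset.mul_sum]
      apply Finset.sum_congr rfl
      intro x' _
      by_cases h : C' x' = d <;> simp [h]
    rw [hsum2]
    rcases Nat.eq_zero_or_pos d with rfl | hd
    · have : (∑ x' : ({v : V // v ≠ v₀} → Fin q),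
          (if C' x' + 1 = 0 then 1 else 0)) = 0 := by
        apply Finset.sum_eq_zero; intro x' _; simp
      rw [this]
      simp [pow_succ]
      ring
    · obtain ⟨e', rfl⟩ : ∃ e', d = e' + 1 := ⟨d - 1, (Nat.succ_pred_eq_of_pos hd).symm⟩
      have : (∑ x' : ({v : V // v ≠ v₀} → Fin q),
          (if C' x' + 1 = e' + 1 then 1 else 0))
            = n.choose e' * (q - 1) ^ (n - e') := by
        rw [← hIH e', Finset.card_filter]
        apply Finset.sum_congr rfl
        intro x' _
        by_cases h : C' x' = e' <;> simp [h]
      rw [this, Nat.choose_succ_succ, Nat.succ_sub_succ]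
      by_cases he : e' < n
      · have h1 : n - e' = (n - (e' + 1)) + 1 := by
          rw [Nat.sub_succ]
          exact (Nat.succ_pred_eq_of_pos (Nat.sub_pos_of_lt he)).symm
        rw [h1, pow_succ]
        ring
      · have h1 : n.choose (e' + 1) = 0 :=
          Nat.choose_eq_zero_of_lt (Nat.lt_succ_of_le (Nat.le_of_not_lt he))
        rw [h1]
        by_cases he2 : e' = n
        · subst he2; simp
        · have h2 : n.choose e' = 0 :=
            Nat.choose_eq_zero_of_lt ((Nat.le_of_not_lt he).lt_of_ne (Ne.symm he2))
          simp [h1, h2]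

/-- On an acyclic directed graph on $I$ vertices with any guessing functions, exactly
$\binom{I}{d}(q-1)^{I-d}$ hat assignments are guessed correctly by exactly $d$ vertices. -/
theorem acyclic_correct_count {V : Type*} [Fintype V] (adj : V → V → Prop)
    (q : ℕ) (hq : 1 ≤ q)
    (hacyclic : ∀ v, ¬ Relation.TransGen adj v v)
    (f : V → (V → Fin q) → Fin q)
    (hdep : ∀ (v : V) (x y : V → Fin q), (∀ u, adj u v → x u = y u) → f v x = f v y)
    (d : ℕ) (hd : d ≤ Fintype.card V) :
    Nat.card {x : V → Fin q // Nat.card {v : V // f v x = x v} = d}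
      = (Fintype.card V).choose d * (q - 1) ^ (Fintype.card V - d) := by
  classical
  have hiff : ∀ x : V → Fin q,
      (Nat.card {v : V // f v x = x v} = d)
        ↔ ((univ.filter fun v => f v x = x v).card = d) := by
    intro x
    rw [Nat.card_eq_fintype_card, Fintype.card_subtype]
  rw [Nat.card_congr (Equiv.subtypeEquivRight hiff)]
  exact aux_count q hq (Fintype.card V) V _ adj hacyclic f hdep rfl d
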